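/- Let n_z, n_s ≥ 1 and let 𝒳 be a nonempty set. Let M*, M ∈ ℝ^{n_z × n_s} be row-stochastic matrices and let φ*, φ : 𝒳 → ℝ^{n_z} be functions whose values are probability vectors, satisfying (M*)^⊤ φ*(x) = M^⊤ φ(x) for all x ∈ 𝒳 (both pairs reproduce the same observed conditional distribution of the proxy given the covariates). Suppose that for each i ∈ {1,…,n_z} there exists x ∈ 𝒳 with φ*(x) equal to the i-th standard basis vector (i.e., φ*_i(x) = 1). Define, for a matrix N ∈ ℝ^{n_z × n_s}, the regularizer L_var(N) = max_{z ∈ {1,…,n_z}} (1/n_s) Σ_{s=1}^{n_s} (N_{zs} − 1/n_s)². Then L_var(M*) ≤ L_var(M). -/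
import Mathlib


open Matrix

/-- The variance regularizer: the maximum over rows `z` of the (population)
variance of the row `N z` of a matrix `N ∈ ℝ^{n_z × n_s}`, i.e.
`L_var(N) = max_z (1/n_s) Σ_s (N_{zs} − 1/n_s)²`. -/
noncomputable def Lvar {n_z n_s : ℕ} (hnz : 0 < n_z)
    (N : Matrix (Fin n_z) (Fin n_s) ℝ) : ℝ :=
  Finset.univ.sup' (Finset.univ_nonempty_iff.mpr (Fin.pos_iff_nonempty.mp hnz))
    (fun z => (1 / (n_s : ℝ)) * ∑ s, (N z s - 1 / (n_s : ℝ)) ^ 2)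

/-- **Theorem 2.** Among all factorizations `(M, φ)` reproducing the same observed
conditional distribution of the proxy given the covariates, a factorization
`(M*, φ*)` satisfying the weak overlap assumption with `η = 1` (for each latent
class `i` there is a point `x` where `φ*(x)` is the `i`-th standard basis vector)
minimizes the maximum row variance `L_var`. -/
theorem regularizer_minimized
    (n_z n_s : ℕ) (hnz : 0 < n_z) (hns : 0 < n_s)
    (𝒳 : Type*) [Nonempty 𝒳]
    (Mstar M : Matrix (Fin n_z) (Fin n_s) ℝ)
    (hMstar_nonneg : ∀ z s, 0 ≤ Mstar z s) (hMstar_rowsum : ∀ z, ∑ s, Mstar z s = 1)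
    (hM_nonneg : ∀ z s, 0 ≤ M z s) (hM_rowsum : ∀ z, ∑ s, M z s = 1)
    (φstar φ : 𝒳 → Fin n_z → ℝ)
    (hφstar_nonneg : ∀ x i, 0 ≤ φstar x i) (hφstar_sum : ∀ x, ∑ i, φstar x i = 1)
    (hφ_nonneg : ∀ x i, 0 ≤ φ x i) (hφ_sum : ∀ x, ∑ i, φ x i = 1)
    (hobs : ∀ x, Mstar.transpose *ᵥ φstar x = M.transpose *ᵥ φ x)
    (hoverlap : ∀ i : Fin n_z, ∃ x, φstar x = Pi.single i 1) :
    Lvar hnz Mstar ≤ Lvar hnz M := by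
  have hne : (Finset.univ : Finset (Fin n_z)).Nonempty :=
    Finset.univ_nonempty_iff.mpr (Fin.pos_iff_nonempty.mp hnz)
  apply Finset.sup'_le
  intro z _
  obtain ⟨x, hx⟩ := hoverlap z
  -- row z of Mstar equals convex combination of rows of M with weights φ x
  have hrow : ∀ s, Mstar z s = ∑ i, φ x i * M i s := by
    intro s
    have := congrFun (hobs x) s
    simp only [Matrix.mulVec, Matrix.transpose_apply, dotProduct, hx] at this
    rw [Finset.sum_eq_single z (fun b _ hb => by simp [Pi.single_apply, hb])
      (by simp)] at this
    simpa [mul_comm] using this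
  set c : ℝ := 1 / (n_s : ℝ)
  have hconv : ConvexOn ℝ Set.univ (fun t : ℝ => t ^ 2) :=
    (Even.convexOn_pow (by norm_num))
  have key : ∀ s, (Mstar z s - c) ^ 2 ≤ ∑ i, φ x i * (M i s - c) ^ 2 := by
    intro s
    have hc : Mstar z s - c = ∑ i, φ x i • (M i s - c) := by
      simp only [smul_eq_mul, mul_sub, Finset.sum_sub_distrib, ← Finset.sum_mul,
        hφ_sum x, one_mul, hrow s]
    rw [hc]
    exact hconv.map_sum_le (fun i _ => hφ_nonneg x i) (hφ_sum x)
      (fun i _ => Set.mem_univ _)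
  calc c * ∑ s, (Mstar z s - c) ^ 2
      ≤ c * ∑ s, ∑ i, φ x i * (M i s - c) ^ 2 := by
        apply mul_le_mul_of_nonneg_left (Finset.sum_le_sum fun s _ => key s)
        positivity
    _ = ∑ i, φ x i * (c * ∑ s, (M i s - c) ^ 2) := by
        rw [Finset.mul_sum]
        simp_rw [Finset.mul_sum]
        rw [Finset.sum_comm]
        apply Finset.sum_congr rfl; intro i _
        apply Finset.sum_congr rfl; intro s _; ring
    _ ≤ ∑ i, φ x i * Lvar hnz M := by
        apply Finset.sum_le_sum
        intro i _
        apply mul_le_mul_of_nonneg_left _ (hφ_nonneg x i)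
        exact Finset.le_sup' (fun j => c * ∑ s, (M j s - c) ^ 2) (Finset.mem_univ i)
    _ = Lvar hnz M := by rw [← Finset.sum_mul, hφ_sum x, one_mul]
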